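/- Let K : (0,∞) → ℝ be locally integrable, eventually decreasing, K(t) → 0 as t → ∞, with sup_{t ≥ 1} |t·K(t)| < ∞. Then (K_cos(ω) − ∫₀^{1/ω} K(t) dt) / |log ω| → 0 as ω → 0⁺. -/

import Mathlib

open MeasureTheory Filter Set Real

lemma tail_bound {K : ℝ → ℝ} {A a ω : ℝ} (hω : 0 < ω)
    (hA : AntitoneOn K (Ici A)) (hnn : ∀ t, A ≤ t → 0 ≤ K t)
    (haA : A ≤ a)
    (hint : ∀ b c, A ≤ b → A ≤ c → IntervalIntegrable K volume b c)
    (N : ℕ) (hN : 1 ≤ N) :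
    |∫ t in a..(a + 2 * (N:ℝ) * (π / ω)), K t * Real.cos (ω * t)| ≤ 3 * (π / ω) * K a := by
  set h := π / ω with hh_def
  have hh : 0 < h := div_pos Real.pi_pos hω
  set T := a + 2 * (N:ℝ) * h with hT_def
  have hN1 : (1:ℝ) ≤ (N:ℝ) := by exact_mod_cast hN
  have hTh : a + h ≤ T - h := by nlinarith
  have haT : a ≤ T - h := by linarith
  have hKa : 0 ≤ K a := hnn a haA
  have hcos : ∀ (b c : ℝ), ContinuousOn (fun t => Real.cos (ω * t)) (uIcc b c) :=
    fun b c => (Real.continuous_cos.comp (continuous_const.mul continuous_id)).continuousOn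
  have hi1 : ∀ b c, A ≤ b → A ≤ c →
      IntervalIntegrable (fun t => K t * Real.cos (ω * t)) volume b c :=
    fun b c hb hc => (hint b c hb hc).mul_continuousOn (hcos b c)
  have hshift : ∀ b c, A ≤ b + h → A ≤ c + h →
      IntervalIntegrable (fun u => K (u + h)) volume b c := by
    intro b c hb hc
    have := (hint (b + h) (c + h) hb hc).comp_add_right h
    have e1 : b + h - h = b := by ring
    have e2 : c + h - h = c := by ring
    rwa [e1, e2] at this
  have hshiftcos : ∀ b c, A ≤ b + h → A ≤ c + h →
      IntervalIntegrable (fun u => K (u + h) * Real.cos (ω * u)) volume b c :=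
    fun b c hb hc => (hshift b c hb hc).mul_continuousOn (hcos b c)
  set I := ∫ t in a..T, K t * Real.cos (ω * t) with hI_def
  have hωh : ω * h = π := by rw [hh_def]; field_simp
  -- substitution identity
  have e1 : (∫ u in (a - h)..(T - h), K (u + h) * Real.cos (ω * u)) = -I := by
    have hfun : ∀ u : ℝ, K (u + h) * Real.cos (ω * u)
        = -((fun t => K t * Real.cos (ω * t)) (u + h)) := by
      intro u
      have : ω * (u + h) = ω * u + π := by rw [mul_add, hωh]
      simp only [this, Real.cos_add_pi]
      ring
    rw [intervalIntegral.integral_congr (g := fun u => -((fun t => K t * Real.cos (ω * t)) (u + h)))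
        (fun u _ => hfun u)]
    rw [intervalIntegral.integral_neg, intervalIntegral.integral_comp_add_right
      (fun t => K t * Real.cos (ω * t)) h]
    have e : a - h + h = a := by ring
    have e' : T - h + h = T := by ring
    rw [e, e']
  have split1 : I = (∫ t in a..(T - h), K t * Real.cos (ω * t))
      + ∫ t in (T - h)..T, K t * Real.cos (ω * t) :=
    (intervalIntegral.integral_add_adjacent_intervals
      (hi1 a (T - h) haA (by linarith)) (hi1 (T - h) T (by linarith) (by linarith))).symm
  have split2 : (∫ u in (a - h)..(T - h), K (u + h) * Real.cos (ω * u))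
      = (∫ u in (a - h)..a, K (u + h) * Real.cos (ω * u))
        + ∫ u in a..(T - h), K (u + h) * Real.cos (ω * u) :=
    (intervalIntegral.integral_add_adjacent_intervals
      (hshiftcos (a - h) a (by linarith) (by linarith))
      (hshiftcos a (T - h) (by linarith) (by linarith))).symm
  have hdiff : (∫ t in a..(T - h), (K t - K (t + h)) * Real.cos (ω * t))
      = (∫ t in a..(T - h), K t * Real.cos (ω * t))
        - ∫ t in a..(T - h), K (t + h) * Real.cos (ω * t) := by
    rw [← intervalIntegral.integral_sub (hi1 a (T - h) haA (by linarith))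
      (hshiftcos a (T - h) (by linarith) (by linarith))]
    exact intervalIntegral.integral_congr (fun t _ => by ring)
  have key : 2 * I = (∫ t in a..(T - h), (K t - K (t + h)) * Real.cos (ω * t))
      + (∫ t in (T - h)..T, K t * Real.cos (ω * t))
      - ∫ u in (a - h)..a, K (u + h) * Real.cos (ω * u) := by
    rw [hdiff]; linarith [split1, split2, e1]
  -- bound E1
  have hb1 : |∫ t in (T - h)..T, K t * Real.cos (ω * t)| ≤ K a * h := by
    have := intervalIntegral.norm_integral_le_of_norm_le_const
      (a := T - h) (b := T) (C := K a) (f := fun t => K t * Real.cos (ω * t)) ?_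
    · rw [Real.norm_eq_abs] at this
      have : |∫ t in (T - h)..T, K t * Real.cos (ω * t)| ≤ K a * |T - (T - h)| := this
      have e : |T - (T - h)| = h := by rw [abs_of_nonneg (by linarith)]; ring
      rw [e] at this; exact this
    · intro x hx
      rw [Set.uIoc_of_le (by linarith : T - h ≤ T)] at hx
      have hax : a ≤ x := le_trans haT hx.1.le
      have hx0 : 0 ≤ K x := hnn x (le_trans haA hax)
      have hKx : K x ≤ K a := hA (mem_Ici.mpr haA) (mem_Ici.mpr (le_trans haA hax)) hax
      calc ‖K x * Real.cos (ω * x)‖ = |K x| * |Real.cos (ω * x)| := abs_mul _ _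
        _ ≤ |K x| * 1 := by
            exact mul_le_mul_of_nonneg_left (Real.abs_cos_le_one _) (abs_nonneg _)
        _ = K x := by rw [mul_one, abs_of_nonneg hx0]
        _ ≤ K a := hKx
  -- bound E2
  have hb2 : |∫ u in (a - h)..a, K (u + h) * Real.cos (ω * u)| ≤ K a * h := by
    have := intervalIntegral.norm_integral_le_of_norm_le_const
      (a := a - h) (b := a) (C := K a) (f := fun u => K (u + h) * Real.cos (ω * u)) ?_
    · rw [Real.norm_eq_abs] at this
      have e : |a - (a - h)| = h := by rw [abs_of_nonneg (by linarith)]; ring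
      rw [e] at this; exact this
    · intro x hx
      rw [Set.uIoc_of_le (by linarith : a - h ≤ a)] at hx
      have hax : a ≤ x + h := by linarith [hx.1]
      have hx0 : 0 ≤ K (x + h) := hnn _ (le_trans haA hax)
      have hKx : K (x + h) ≤ K a := hA (mem_Ici.mpr haA) (mem_Ici.mpr (le_trans haA hax)) hax
      calc ‖K (x + h) * Real.cos (ω * x)‖ = |K (x + h)| * |Real.cos (ω * x)| := abs_mul _ _
        _ ≤ |K (x + h)| * 1 :=
            mul_le_mul_of_nonneg_left (Real.abs_cos_le_one _) (abs_nonneg _)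
        _ = K (x + h) := by rw [mul_one, abs_of_nonneg hx0]
        _ ≤ K a := hKx
  -- bound main term
  have hintsub : IntervalIntegrable (fun t => K t - K (t + h)) volume a (T - h) :=
    (hint a (T - h) haA (by linarith)).sub (hshift a (T - h) (by linarith) (by linarith))
  have hb3 : |∫ t in a..(T - h), (K t - K (t + h)) * Real.cos (ω * t)| ≤ K a * h := by
    have hstep1 : |∫ t in a..(T - h), (K t - K (t + h)) * Real.cos (ω * t)|
        ≤ |∫ t in a..(T - h), (K t - K (t + h))| := by
      have := intervalIntegral.norm_integral_le_of_norm_le (μ := volume)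
        (f := fun t => (K t - K (t + h)) * Real.cos (ω * t))
        (g := fun t => K t - K (t + h)) (a := a) (b := T - h) haT ?_ hintsub
      · refine le_trans ?_ (le_abs_self _)
        simpa using this
      · filter_upwards with t ht
        have h1 : A ≤ t := le_trans haA ht.1.le
        have h2 : K (t + h) ≤ K t := hA (mem_Ici.mpr h1) (mem_Ici.mpr (by linarith)) (by linarith)
        calc ‖(K t - K (t + h)) * Real.cos (ω * t)‖
            = |K t - K (t + h)| * |Real.cos (ω * t)| := abs_mul _ _
          _ ≤ |K t - K (t + h)| * 1 :=
              mul_le_mul_of_nonneg_left (Real.abs_cos_le_one _) (abs_nonneg _)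
          _ = K t - K (t + h) := by rw [mul_one, abs_of_nonneg (by linarith)]
    have hstep2 : (∫ t in a..(T - h), (K t - K (t + h)))
        = (∫ t in a..(a + h), K t) - ∫ t in (T - h)..T, K t := by
      rw [intervalIntegral.integral_sub (hint a (T - h) haA (by linarith))
        (hshift a (T - h) (by linarith) (by linarith))]
      have e : (∫ t in a..(T - h), K (t + h)) = ∫ t in (a + h)..T, K t := by
        rw [intervalIntegral.integral_comp_add_right K h]
        congr 1
        ring
      rw [e]
      have c1 := intervalIntegral.integral_add_adjacent_intervals
        (hint a (a + h) haA (by linarith)) (hint (a + h) (T - h) (by linarith) (by linarith))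
      have c2 := intervalIntegral.integral_add_adjacent_intervals
        (hint (a + h) (T - h) (by linarith) (by linarith)) (hint (T - h) T (by linarith) (by linarith))
      linarith [c1, c2]
    have hA1 : |∫ t in a..(a + h), K t| ≤ K a * h := by
      have := intervalIntegral.norm_integral_le_of_norm_le_const
        (a := a) (b := a + h) (C := K a) (f := K) ?_
      · rw [Real.norm_eq_abs] at this
        have e : |a + h - a| = h := by rw [abs_of_nonneg (by linarith)]; ring
        rw [e] at this; exact this
      · intro x hx
        rw [Set.uIoc_of_le (by linarith : a ≤ a + h)] at hx
        have h1 : A ≤ x := le_trans haA hx.1.le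
        rw [Real.norm_eq_abs, abs_of_nonneg (hnn x h1)]
        exact hA (mem_Ici.mpr haA) (mem_Ici.mpr h1) hx.1.le
    have hA2 : |∫ t in (T - h)..T, K t| ≤ K a * h := by
      have := intervalIntegral.norm_integral_le_of_norm_le_const
        (a := T - h) (b := T) (C := K a) (f := K) ?_
      · rw [Real.norm_eq_abs] at this
        have e : |T - (T - h)| = h := by rw [abs_of_nonneg (by linarith)]; ring
        rw [e] at this; exact this
      · intro x hx
        rw [Set.uIoc_of_le (by linarith : T - h ≤ T)] at hx
        have h1 : A ≤ x := by linarith [hx.1, haT, haA]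
        rw [Real.norm_eq_abs, abs_of_nonneg (hnn x h1)]
        exact hA (mem_Ici.mpr haA) (mem_Ici.mpr h1) (by linarith [hx.1, haT])
    have hA2n : 0 ≤ ∫ t in (T - h)..T, K t :=
      intervalIntegral.integral_nonneg (by linarith)
        (fun u hu => hnn u (by linarith [hu.1, haT, haA]))
    have hA1n : 0 ≤ ∫ t in a..(a + h), K t :=
      intervalIntegral.integral_nonneg (by linarith)
        (fun u hu => hnn u (le_trans haA hu.1))
    calc |∫ t in a..(T - h), (K t - K (t + h)) * Real.cos (ω * t)|
        ≤ |∫ t in a..(T - h), (K t - K (t + h))| := hstep1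
      _ = |(∫ t in a..(a + h), K t) - ∫ t in (T - h)..T, K t| := by rw [hstep2]
      _ ≤ K a * h := abs_le.mpr ⟨by linarith [abs_le.mp hA1, abs_le.mp hA2],
          by linarith [abs_le.mp hA1]⟩
  have h2I : |2 * I| ≤ 3 * (K a * h) := by
    rw [key]
    have m1 := abs_le.mp hb1
    have m2 := abs_le.mp hb2
    have m3 := abs_le.mp hb3
    exact abs_le.mpr ⟨by linarith, by linarith⟩
  have habs : |2 * I| = 2 * |I| := by rw [abs_mul, abs_two]
  rw [habs] at h2I
  have hcomm : h * K a = K a * h := mul_comm _ _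
  linarith [abs_nonneg I]
set_option maxHeartbeats 1000000 in
theorem stmt_3 (K : ℝ → ℝ)
    (hloc : LocallyIntegrableOn K (Ioi 0))
    (hint0 : IntegrableOn K (Ioc 0 1))
    (hdec : ∃ A > (0:ℝ), AntitoneOn K (Ici A))
    (hK0 : Tendsto K atTop (nhds 0))
    (hsup : ∃ M : ℝ, ∀ t ≥ (1:ℝ), |t * K t| ≤ M)
    (Kcos : ℝ → ℝ)
    (hKcos : ∀ ω > (0:ℝ),
      Tendsto (fun T => ∫ t in (0:ℝ)..T, K t * Real.cos (ω * t)) atTop (nhds (Kcos ω))) :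
    Tendsto (fun ω => (Kcos ω - ∫ t in (0:ℝ)..(1/ω), K t) / |Real.log ω|)
      (nhdsWithin 0 (Ioi 0)) (nhds 0) := by
  obtain ⟨A, hA0, hA⟩ := hdec
  obtain ⟨M, hM⟩ := hsup
  have hM0 : 0 ≤ M := le_trans (abs_nonneg _) (hM 1 le_rfl)
  have hnn : ∀ t, A ≤ t → 0 ≤ K t := by
    intro t ht
    refine le_of_tendsto hK0 ?_
    filter_upwards [eventually_ge_atTop t] with s hs
    exact hA (mem_Ici.mpr ht) (mem_Ici.mpr (le_trans ht hs)) hs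
  have hint : ∀ b c : ℝ, 0 < b → 0 < c → IntervalIntegrable K volume b c := by
    intro b c hb hc
    apply IntegrableOn.intervalIntegrable
    apply hloc.integrableOn_compact_subset ?_ isCompact_uIcc
    intro x hx
    rcases Set.mem_uIcc.mp hx with ⟨h1, _⟩ | ⟨h1, _⟩
    · exact Set.mem_Ioi.mpr (lt_of_lt_of_le hb h1)
    · exact Set.mem_Ioi.mpr (lt_of_lt_of_le hc h1)
  have hint01 : IntervalIntegrable K volume 0 1 := by
    rw [intervalIntegrable_iff, Set.uIoc_of_le zero_le_one]
    exact hint0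
  have hint0b : ∀ b : ℝ, 0 < b → IntervalIntegrable K volume 0 b := by
    intro b hb
    rcases le_total b 1 with h | h
    · rw [intervalIntegrable_iff, Set.uIoc_of_le hb.le]
      exact hint0.mono_set (Set.Ioc_subset_Ioc le_rfl h)
    · exact hint01.trans (hint 1 b one_pos hb)
  have hcos : ∀ (ω b c : ℝ), ContinuousOn (fun t => Real.cos (ω * t)) (uIcc b c) :=
    fun ω b c => (Real.continuous_cos.comp (continuous_const.mul continuous_id)).continuousOn
  set C := 2 * (∫ t in (0:ℝ)..1, |K t|) + M / 4 + 3 * π * M with hC_def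
  set δ := min 1 (1 / A) with hδ_def
  have hδ0 : 0 < δ := lt_min one_pos (by positivity)
  -- main claim
  have claim : ∀ ω : ℝ, 0 < ω → ω < δ → |Kcos ω - ∫ t in (0:ℝ)..(1 / ω), K t| ≤ C := by
    intro ω hω hωδ
    set a := 1 / ω with ha_def
    have hω1 : ω ≤ 1 := le_of_lt (lt_of_lt_of_le hωδ (min_le_left _ _))
    have ha1 : 1 ≤ a := by rw [ha_def, le_div_iff₀ hω]; linarith
    have ha0 : 0 < a := lt_of_lt_of_le one_pos ha1
    have hωA : ω < 1 / A := lt_of_lt_of_le hωδ (min_le_right _ _)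
    have haA : A ≤ a := by
      rw [ha_def, le_div_iff₀ hω]
      have h1A : A * (1 / A) = 1 := mul_one_div_cancel hA0.ne'
      nlinarith
    have hωa : ω * a = 1 := by rw [ha_def]; field_simp
    have hKa : 0 ≤ K a := hnn a haA
    have hKaM : K a ≤ M * ω := by
      have h1 := (abs_le.mp (hM a ha1)).2
      have e : K a = ω * (a * K a) := by
        rw [ha_def]; field_simp
      rw [e]
      calc ω * (a * K a) ≤ ω * M := mul_le_mul_of_nonneg_left h1 hω.le
        _ = M * ω := mul_comm _ _
    have hint' : ∀ b c, A ≤ b → A ≤ c → IntervalIntegrable K volume b c :=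
      fun b c hb hc => hint b c (lt_of_lt_of_le hA0 hb) (lt_of_lt_of_le hA0 hc)
    -- the sequence
    set g : ℕ → ℝ := fun N => ∫ t in (0:ℝ)..(a + 2 * (N:ℝ) * (π / ω)), K t * Real.cos (ω * t)
      with hg_def
    have htend : Tendsto (fun N : ℕ => a + 2 * (N:ℝ) * (π / ω)) atTop atTop := by
      apply tendsto_atTop_add_const_left
      have h2 : Tendsto (fun N : ℕ => (N:ℝ)) atTop atTop := tendsto_natCast_atTop_atTop
      have e : (fun N : ℕ => 2 * (N:ℝ) * (π / ω)) = fun N : ℕ => (2 * (π / ω)) * (N:ℝ) := by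
        funext N; ring
      rw [e]
      exact h2.const_mul_atTop (by positivity)
    have hg : Tendsto g atTop (nhds (Kcos ω)) := (hKcos ω hω).comp htend
    -- first piece bound
    have hfirst : |∫ t in (0:ℝ)..a, (K t * Real.cos (ω * t) - K t)|
        ≤ 2 * (∫ t in (0:ℝ)..1, |K t|) + M / 4 := by
      have hi01 : IntervalIntegrable (fun t => K t * Real.cos (ω * t) - K t) volume 0 1 :=
        (hint01.mul_continuousOn (hcos ω 0 1)).sub hint01
      have hi1a : IntervalIntegrable (fun t => K t * Real.cos (ω * t) - K t) volume 1 a :=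
        ((hint 1 a one_pos ha0).mul_continuousOn (hcos ω 1 a)).sub (hint 1 a one_pos ha0)
      have hsplit := intervalIntegral.integral_add_adjacent_intervals hi01 hi1a
      have hp1 : |∫ t in (0:ℝ)..1, (K t * Real.cos (ω * t) - K t)|
          ≤ 2 * ∫ t in (0:ℝ)..1, |K t| := by
        have := intervalIntegral.norm_integral_le_of_norm_le (μ := volume)
          (f := fun t => K t * Real.cos (ω * t) - K t)
          (g := fun t => 2 * |K t|) (a := 0) (b := 1) zero_le_one ?_ (hint01.norm.const_mul 2)
        · have e : (∫ t in (0:ℝ)..1, 2 * |K t|) = 2 * ∫ t in (0:ℝ)..1, |K t| :=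
            intervalIntegral.integral_const_mul 2 _
          rw [Real.norm_eq_abs, e] at this
          have hnn' : 0 ≤ 2 * ∫ t in (0:ℝ)..1, |K t| := by
            have : 0 ≤ ∫ t in (0:ℝ)..1, |K t| :=
              intervalIntegral.integral_nonneg zero_le_one (fun u _ => abs_nonneg _)
            linarith
          exact this
        · filter_upwards with t _
          have h1 : |Real.cos (ω * t) - 1| ≤ 2 := by
            have := Real.abs_cos_le_one (ω * t)
            rw [abs_le] at this ⊢
            constructor <;> linarith [this.1, this.2]
          calc ‖K t * Real.cos (ω * t) - K t‖ = |K t| * |Real.cos (ω * t) - 1| := by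
                rw [Real.norm_eq_abs, ← abs_mul]; congr 1; ring
            _ ≤ |K t| * 2 := mul_le_mul_of_nonneg_left h1 (abs_nonneg _)
            _ = 2 * |K t| := mul_comm _ _
      have hp2 : |∫ t in (1:ℝ)..a, (K t * Real.cos (ω * t) - K t)| ≤ M / 4 := by
        have hgi : IntervalIntegrable (fun t => M * ω ^ 2 / 2 * t) volume 1 a :=
          (continuous_const.mul continuous_id).intervalIntegrable _ _
        have := intervalIntegral.norm_integral_le_of_norm_le (μ := volume)
          (f := fun t => K t * Real.cos (ω * t) - K t)
          (g := fun t => M * ω ^ 2 / 2 * t) (a := 1) (b := a) ha1 ?_ hgi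
        · have e : (∫ t in (1:ℝ)..a, M * ω ^ 2 / 2 * t) = M * ω ^ 2 / 2 * ((a ^ 2 - 1 ^ 2) / 2) := by
            rw [intervalIntegral.integral_const_mul, integral_id]
          rw [Real.norm_eq_abs, e] at this
          have hval : M * ω ^ 2 / 2 * ((a ^ 2 - 1 ^ 2) / 2) ≤ M / 4 := by
            have h1 : ω ^ 2 * a ^ 2 = 1 := by rw [← mul_pow, hωa]; norm_num
            nlinarith [mul_nonneg hM0 (sq_nonneg ω)]
          have hvnn : 0 ≤ M * ω ^ 2 / 2 * ((a ^ 2 - 1 ^ 2) / 2) := by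
            have h2 : (0:ℝ) ≤ M * ω ^ 2 := mul_nonneg hM0 (sq_nonneg ω)
            have h3 : (1:ℝ) ≤ a ^ 2 := by nlinarith
            nlinarith [mul_nonneg h2 (by linarith : (0:ℝ) ≤ a ^ 2 - 1)]
          linarith
        · filter_upwards with t ht
          have ht1 : 1 ≤ t := ht.1.le
          have ht0 : 0 < t := lt_of_lt_of_le one_pos ht1
          have hKt : |K t| ≤ M / t := by
            rw [le_div_iff₀ ht0]
            calc |K t| * t = |t * K t| := by rw [abs_mul, abs_of_pos ht0]; ring
              _ ≤ M := hM t ht1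
          have hcos1 : |Real.cos (ω * t) - 1| ≤ (ω * t) ^ 2 / 2 := by
            have h1 := Real.one_sub_sq_div_two_le_cos (x := ω * t)
            have h2 := Real.cos_le_one (ω * t)
            rw [abs_le]
            constructor <;> nlinarith
          calc ‖K t * Real.cos (ω * t) - K t‖ = |K t| * |Real.cos (ω * t) - 1| := by
                rw [Real.norm_eq_abs, ← abs_mul]; congr 1; ring
            _ ≤ (M / t) * ((ω * t) ^ 2 / 2) := by
                apply mul_le_mul hKt hcos1 (abs_nonneg _) (by positivity)
            _ = M * ω ^ 2 / 2 * t := by field_simp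
      calc |∫ t in (0:ℝ)..a, (K t * Real.cos (ω * t) - K t)|
          = |(∫ t in (0:ℝ)..1, (K t * Real.cos (ω * t) - K t))
            + ∫ t in (1:ℝ)..a, (K t * Real.cos (ω * t) - K t)| := by rw [hsplit]
        _ ≤ |∫ t in (0:ℝ)..1, (K t * Real.cos (ω * t) - K t)|
            + |∫ t in (1:ℝ)..a, (K t * Real.cos (ω * t) - K t)| := abs_add_le _ _
        _ ≤ 2 * (∫ t in (0:ℝ)..1, |K t|) + M / 4 := add_le_add hp1 hp2
    -- eventual bound on the sequence
    have hev : ∀ᶠ N in atTop, |g N - ∫ t in (0:ℝ)..a, K t| ≤ C := by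
      filter_upwards [eventually_ge_atTop 1] with N hN
      have htail := tail_bound (K := K) (A := A) (a := a) hω hA hnn haA hint' N hN
      have htail2 : |∫ t in a..(a + 2 * (N:ℝ) * (π / ω)), K t * Real.cos (ω * t)|
          ≤ 3 * π * M := by
        refine le_trans htail ?_
        calc 3 * (π / ω) * K a ≤ 3 * (π / ω) * (M * ω) :=
              mul_le_mul_of_nonneg_left hKaM (by positivity)
          _ = 3 * π * M := by field_simp
      have hgsplit : g N = (∫ t in (0:ℝ)..a, K t * Real.cos (ω * t))
          + ∫ t in a..(a + 2 * (N:ℝ) * (π / ω)), K t * Real.cos (ω * t) := by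
        refine (intervalIntegral.integral_add_adjacent_intervals
          ((hint0b a ha0).mul_continuousOn (hcos ω 0 a))
          ((hint a _ ha0 (by positivity)).mul_continuousOn (hcos ω a _))).symm
      have hdiff : (∫ t in (0:ℝ)..a, K t * Real.cos (ω * t)) - (∫ t in (0:ℝ)..a, K t)
          = ∫ t in (0:ℝ)..a, (K t * Real.cos (ω * t) - K t) := by
        rw [intervalIntegral.integral_sub ((hint0b a ha0).mul_continuousOn (hcos ω 0 a))
          (hint0b a ha0)]
      have e : g N - ∫ t in (0:ℝ)..a, K t
          = (∫ t in (0:ℝ)..a, (K t * Real.cos (ω * t) - K t))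
            + ∫ t in a..(a + 2 * (N:ℝ) * (π / ω)), K t * Real.cos (ω * t) := by
        rw [hgsplit, ← hdiff]; ring
      rw [e, hC_def]
      calc |(∫ t in (0:ℝ)..a, (K t * Real.cos (ω * t) - K t))
            + ∫ t in a..(a + 2 * (N:ℝ) * (π / ω)), K t * Real.cos (ω * t)|
          ≤ |∫ t in (0:ℝ)..a, (K t * Real.cos (ω * t) - K t)|
            + |∫ t in a..(a + 2 * (N:ℝ) * (π / ω)), K t * Real.cos (ω * t)| := abs_add_le _ _
        _ ≤ (2 * (∫ t in (0:ℝ)..1, |K t|) + M / 4) + 3 * π * M := add_le_add hfirst htail2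
        _ = 2 * (∫ t in (0:ℝ)..1, |K t|) + M / 4 + 3 * π * M := by ring
    have hlim : Tendsto (fun N => |g N - ∫ t in (0:ℝ)..a, K t|) atTop
        (nhds (|Kcos ω - ∫ t in (0:ℝ)..a, K t|)) :=
      ((hg.sub tendsto_const_nhds).abs)
    exact le_of_tendsto hlim hev
  -- squeeze
  apply squeeze_zero_norm' (a := fun ω => C / |Real.log ω|)
  · filter_upwards [Ioo_mem_nhdsGT hδ0] with ω hω
    obtain ⟨hω0, hωδ⟩ := hω
    have hlogneg : Real.log ω < 0 :=
      Real.log_neg hω0 (lt_of_lt_of_le hωδ (min_le_left _ _))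
    have hlog : 0 < |Real.log ω| := abs_pos.mpr (ne_of_lt hlogneg)
    rw [Real.norm_eq_abs, abs_div, abs_abs]
    exact (div_le_div_iff_of_pos_right hlog).mpr (claim ω hω0 hωδ)
  · exact Tendsto.div_atTop tendsto_const_nhds
      (tendsto_abs_atBot_atTop.comp Real.tendsto_log_nhdsGT_zero)
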